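/- Suppose an allocation x, prices p, and MBB values α satisfy for all agents i and goods j: u_{i,j,m(j,x_i)+1} ≤ α_i·p_j ≤ u_{i,j,m(j,x_i)} (with the usual conventions at the boundary). Then for every allocation y, Σ_i u_i(y_i)/α_i ≤ Σ_i u_i(x_i)/α_i; i.e., x maximizes the α-scaled social welfare. -/

import Mathlib

open Finset

/-- Utility of a multiset bundle `S` (given by its multiplicity function) for an agent
with per-copy utilities `u j ℓ` (the utility of the `(ℓ+1)`-st copy of good `j`). -/
noncomputable def bundleUtil {m : ℕ} (u : Fin m → ℕ → ℝ) (S : Fin m → ℕ) : ℝ :=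
  ∑ j, ∑ ℓ ∈ Finset.range (S j), u j ℓ

lemma key_ineq (u : ℕ → ℝ) (hmono : ∀ ℓ, u (ℓ + 1) ≤ u ℓ) (a b k : ℕ)
    (hbk : b ≤ k) (c : ℝ) (hub : a < k → u a ≤ c) (hlb : 0 < a → c ≤ u (a - 1)) :
    ∑ ℓ ∈ Finset.range b, u ℓ - ∑ ℓ ∈ Finset.range a, u ℓ ≤ c * ((b : ℝ) - a) := by
  have hA : Antitone u := antitone_nat_of_succ_le hmono
  rcases le_or_gt a b with h | h
  · have hsplit : ∑ ℓ ∈ Finset.range b, u ℓ - ∑ ℓ ∈ Finset.range a, u ℓ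
        = ∑ ℓ ∈ Finset.Ico a b, u ℓ := by
      rw [Finset.range_eq_Ico,
        ← Finset.sum_Ico_consecutive u (Nat.zero_le a) h, Finset.range_eq_Ico]
      ring
    rw [hsplit]
    rcases eq_or_lt_of_le h with rfl | hab
    · simp
    · have hak : a < k := lt_of_lt_of_le hab hbk
      calc ∑ ℓ ∈ Finset.Ico a b, u ℓ ≤ ∑ _ℓ ∈ Finset.Ico a b, c := by
            apply Finset.sum_le_sum
            intro ℓ hℓ
            exact le_trans (hA (Finset.mem_Ico.mp hℓ).1) (hub hak)
        _ = c * ((b : ℝ) - a) := by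
            rw [Finset.sum_const, Nat.card_Ico, nsmul_eq_mul, Nat.cast_sub h]
            ring
  · have ha : 0 < a := lt_of_le_of_lt (Nat.zero_le b) h
    have hsplit : ∑ ℓ ∈ Finset.range a, u ℓ - ∑ ℓ ∈ Finset.range b, u ℓ
        = ∑ ℓ ∈ Finset.Ico b a, u ℓ := by
      rw [Finset.range_eq_Ico,
        ← Finset.sum_Ico_consecutive u (Nat.zero_le b) h.le, Finset.range_eq_Ico]
      ring
    have hge : c * ((a : ℝ) - b) ≤ ∑ ℓ ∈ Finset.Ico b a, u ℓ := by
      calc c * ((a : ℝ) - b) = ∑ _ℓ ∈ Finset.Ico b a, c := by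
            rw [Finset.sum_const, Nat.card_Ico, nsmul_eq_mul, Nat.cast_sub h.le]; ring
        _ ≤ ∑ ℓ ∈ Finset.Ico b a, u ℓ := by
            apply Finset.sum_le_sum
            intro ℓ hℓ
            have hℓa : ℓ ≤ a - 1 := Nat.le_sub_one_of_lt (Finset.mem_Ico.mp hℓ).2
            exact le_trans (hlb ha) (hA hℓa)
    linarith

/-- If `(x, p, α)` satisfies the MBB interval condition
`u_{i,j,m(j,x_i)+1} ≤ α_i·p_j ≤ u_{i,j,m(j,x_i)}` (with the boundary conventions),
then `x` maximizes the `α`-scaled social welfare `Σ_i u_i(·)/α_i` over all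
integral allocations. -/
theorem mbb_implies_scaled_sw_max {n m : ℕ} (kcopies : Fin m → ℕ)
    (u : Fin n → Fin m → ℕ → ℝ)
    (hmono : ∀ i j ℓ, u i j (ℓ + 1) ≤ u i j ℓ)
    (hnn : ∀ i j ℓ, 0 ≤ u i j ℓ)
    (α : Fin n → ℝ) (p : Fin m → ℝ) (hα : ∀ i, 0 < α i) (hp : ∀ j, 0 < p j)
    (x : Fin n → Fin m → ℕ) (halloc : ∀ j, ∑ i, x i j = kcopies j)
    (hub : ∀ i j, x i j < kcopies j → u i j (x i j) ≤ α i * p j)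
    (hlb : ∀ i j, 0 < x i j → α i * p j ≤ u i j (x i j - 1)) :
    ∀ y : Fin n → Fin m → ℕ, (∀ j, ∑ i, y i j = kcopies j) →
      ∑ i, bundleUtil (u i) (y i) / α i ≤ ∑ i, bundleUtil (u i) (x i) / α i := by
  intro y hy
  have hyk : ∀ i j, y i j ≤ kcopies j := by
    intro i j
    rw [← hy j]
    exact Finset.single_le_sum (f := fun i => y i j) (fun i _ => Nat.zero_le _) (Finset.mem_univ i)
  have hstep : ∀ i, bundleUtil (u i) (y i) / α i - bundleUtil (u i) (x i) / α i
      ≤ ∑ j, p j * ((y i j : ℝ) - x i j) := by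
    intro i
    have h1 : bundleUtil (u i) (y i) - bundleUtil (u i) (x i)
        ≤ ∑ j, (α i * p j) * ((y i j : ℝ) - x i j) := by
      unfold bundleUtil
      rw [← Finset.sum_sub_distrib]
      exact Finset.sum_le_sum fun j _ =>
        key_ineq (u i j) (fun ℓ => hmono i j ℓ) (x i j) (y i j) (kcopies j)
          (hyk i j) (α i * p j) (hub i j) (hlb i j)
    have h2 : ∑ j, (α i * p j) * ((y i j : ℝ) - x i j)
        = α i * ∑ j, p j * ((y i j : ℝ) - x i j) := by
      rw [Finset.mul_sum]; congr 1; funext j; ring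
    rw [← sub_div, div_le_iff₀ (hα i)]
    rw [h2] at h1
    linarith [h1]
  have htot := Finset.sum_le_sum (fun i (_ : i ∈ Finset.univ) => hstep i)
  have hzero : ∑ i, ∑ j, p j * ((y i j : ℝ) - x i j) = 0 := by
    rw [Finset.sum_comm]
    apply Finset.sum_eq_zero
    intro j _
    rw [← Finset.mul_sum, Finset.sum_sub_distrib]
    have hc : (∑ i, ((y i j : ℝ))) = ∑ i, ((x i j : ℝ)) := by
      rw [← Nat.cast_sum, ← Nat.cast_sum, hy j, halloc j]
    rw [hc]
    ring
  rw [Finset.sum_sub_distrib, hzero] at htot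
  linarith
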